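/- Let n = 2^α m with α ≥ 1 and m an odd positive integer, and let d = 2^β m' be a proper divisor of n (so 0 ≤ β ≤ α and m' | m). Let C = {c = (c_0, c_1, …, c_{α-1}) ∈ ℤ₂^α : gcd(∑_{j=0}^{α-1} c_j 2^j, 2^α) = 2^β} (equivalently, c_j = 0 for all j < β and c_β = 1 when β < α, and C = {0} when β = α). Then Cay(ℤ_n, S_{ℤ_n}(d)) is isomorphic as a graph to the Kronecker product X(C) × Cay(ℤ_m, S_{ℤ_m}(m')). -/

import Mathlib

open Matrix Complex

/-- Adjacency matrix of the Cayley graph `Cay(Γ, S)`: `a, b` adjacent iff `a - b ∈ S`. -/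
noncomputable def cayAdj {G : Type*} [AddGroup G] (S : Set G) : Matrix G G ℂ :=
  Matrix.of fun a b => S.indicator (fun _ => (1 : ℂ)) (a - b)

/-- Adjacency matrix of the cubelike graph `X(C)` over `ℤ₂^α`:
`x, y` adjacent iff `x + y ∈ C`. -/
noncomputable def cubeAdj {n : ℕ} (C : Set (Fin n → ZMod 2)) :
    Matrix (Fin n → ZMod 2) (Fin n → ZMod 2) ℂ :=
  Matrix.of fun x y => C.indicator (fun _ => (1 : ℂ)) (x + y)

/-- Let `n = 2^α * m` with `α ≥ 1` and `m` odd, and let `d = 2^β * m'` be a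
proper divisor of `n` (so `β ≤ α` and `m' ∣ m`).  Let
`C = {c ∈ ℤ₂^α : gcd(∑ c_j 2^j, 2^α) = 2^β}` (with the convention `gcd(0, k) = k`).
Then `Cay(ℤ_n, S_{ℤ_n}(d))` is isomorphic, as a graph, to the Kronecker product
`X(C) × Cay(ℤ_m, S_{ℤ_m}(m'))`. -/

def finZMod2 : Fin 2 ≃ ZMod 2 := Equiv.cast rfl

def zmodFinEquiv (n : ℕ) [NeZero n] : ZMod n ≃ Fin n where
  toFun x := ⟨x.val, ZMod.val_lt x⟩
  invFun f := (f : ℕ)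
  left_inv x := by
    show ((x.val : ℕ) : ZMod n) = x
    rw [ZMod.natCast_val, ZMod.cast_id]
  right_inv f := by ext; simp [ZMod.val_natCast, Nat.mod_eq_of_lt f.isLt]

def binE (α : ℕ) [NeZero (2^α)] : ZMod (2^α) ≃ (Fin α → ZMod 2) :=
  (zmodFinEquiv (2^α)).trans (finFunctionFinEquiv.symm.trans
    (Equiv.piCongrRight fun _ => finZMod2))

lemma binE_val (α : ℕ) [NeZero (2^α)] (x : ZMod (2^α)) (j : Fin α) :
    (binE α x j).val = x.val / 2^(j:ℕ) % 2 := rfl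

lemma binE_sum (α : ℕ) [NeZero (2^α)] (x : ZMod (2^α)) :
    ∑ j : Fin α, (binE α x j).val * 2^(j:ℕ) = x.val := by
  have h := finFunctionFinEquiv_apply (m := 2) (n := α)
    (finFunctionFinEquiv.symm ⟨x.val, ZMod.val_lt x⟩)
  rw [Equiv.apply_symm_apply] at h
  exact h.symm

lemma mod_xor' (a b k : ℕ) : (a ^^^ b) % 2^k = (a % 2^k) ^^^ (b % 2^k) := by
  apply Nat.eq_of_testBit_eq
  intro i
  simp only [Nat.testBit_mod_two_pow, Nat.testBit_xor]
  by_cases h : i < k <;> simp [h]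

lemma two_pow_dvd_xor_iff (a b k : ℕ) : 2^k ∣ (a ^^^ b) ↔ a % 2^k = b % 2^k := by
  rw [Nat.dvd_iff_mod_eq_zero, mod_xor', xor_eq_zero_iff]

lemma two_pow_dvd_sub_val_iff (α k : ℕ) [NeZero (2^α)] (a b : ZMod (2^α)) :
    2^k ∣ (a - b).val ↔ a.val % 2^k = b.val % 2^k := by
  by_cases hk : k ≤ α
  · haveI : NeZero (2^k) := ⟨pow_ne_zero k two_ne_zero⟩
    rw [← ZMod.natCast_eq_zero_iff]
    have hdvd : (2:ℕ)^k ∣ 2^α := pow_dvd_pow 2 hk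
    have h1 : ∀ c : ZMod (2^α), ((c.val : ℕ) : ZMod (2^k)) = ZMod.castHom hdvd (ZMod (2^k)) c := by
      intro c; rw [ZMod.natCast_val, ZMod.castHom_apply]
    rw [h1, map_sub, sub_eq_zero, ← h1, ← h1, ZMod.natCast_eq_natCast_iff']
  · push_neg at hk
    have hle : (2:ℕ)^α ≤ 2^k := Nat.pow_le_pow_right (by norm_num) hk.le
    have hab : a.val < 2^k := lt_of_lt_of_le (ZMod.val_lt a) hle
    have hbb : b.val < 2^k := lt_of_lt_of_le (ZMod.val_lt b) hle
    have hsb : (a - b).val < 2^k := lt_of_lt_of_le (ZMod.val_lt _) hle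
    rw [Nat.mod_eq_of_lt hab, Nat.mod_eq_of_lt hbb]
    constructor
    · intro h
      have h0 : (a - b).val = 0 := Nat.eq_zero_of_dvd_of_lt h hsb
      have : a = b := by
        have := (ZMod.val_eq_zero _).mp h0
        rwa [sub_eq_zero] at this
      rw [this]
    · intro h
      have : a = b := ZMod.val_injective _ h
      simp [this]

lemma gcd_xor_sub (α : ℕ) [NeZero (2^α)] (a b : ZMod (2^α)) :
    Nat.gcd (a.val ^^^ b.val) (2^α) = Nat.gcd ((a - b).val) (2^α) := by
  have key : ∀ k, 2^k ∣ (a.val ^^^ b.val) ↔ 2^k ∣ (a - b).val := fun k => by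
    rw [two_pow_dvd_xor_iff, two_pow_dvd_sub_val_iff]
  have h1 : ∀ u v : ℕ, (∀ k, 2^k ∣ u ↔ 2^k ∣ v) → Nat.gcd u (2^α) ∣ Nat.gcd v (2^α) := by
    intro u v h
    obtain ⟨s, -, hs⟩ := (Nat.dvd_prime_pow Nat.prime_two).mp (Nat.gcd_dvd_right u (2^α))
    rw [hs]
    exact Nat.dvd_gcd ((h s).mp (hs ▸ Nat.gcd_dvd_left u (2^α))) (hs ▸ Nat.gcd_dvd_right u (2^α))
  exact Nat.dvd_antisymm (h1 _ _ key) (h1 _ _ fun k => (key k).symm)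

lemma digit_arith (p q r : ℕ) (hp : p < 2) (hq : q < 2) (hr : r < 2)
    (h : (r = 1) ↔ ¬((p = 1) ↔ (q = 1))) : (p + q) % 2 = r := by omega

lemma sum_binE_add (α : ℕ) [NeZero (2^α)] (a b : ZMod (2^α)) :
    ∑ j : Fin α, ((binE α a + binE α b) j).val * 2^(j:ℕ) = a.val ^^^ b.val := by
  have hw : a.val ^^^ b.val < 2^α := Nat.xor_lt_two_pow (ZMod.val_lt a) (ZMod.val_lt b)
  set W : ZMod (2^α) := ((a.val ^^^ b.val : ℕ) : ZMod (2^α)) with hW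
  have hWval : W.val = a.val ^^^ b.val := by rw [hW, ZMod.val_natCast, Nat.mod_eq_of_lt hw]
  have hc : ∀ j : Fin α, ((binE α a + binE α b) j).val = (binE α W j).val := by
    intro j
    have hadd : ((binE α a + binE α b) j).val = ((binE α a j).val + (binE α b j).val) % 2 := by
      rw [Pi.add_apply, ZMod.val_add]
    rw [hadd, binE_val, binE_val, binE_val, hWval]
    apply digit_arith _ _ _ (Nat.mod_lt _ (by norm_num)) (Nat.mod_lt _ (by norm_num))
      (Nat.mod_lt _ (by norm_num))
    have t1 := @Nat.testBit_eq_decide_div_mod_eq (j:ℕ) a.val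
    have t2 := @Nat.testBit_eq_decide_div_mod_eq (j:ℕ) b.val
    have t3 := @Nat.testBit_eq_decide_div_mod_eq (j:ℕ) (a.val ^^^ b.val)
    have t4 : (a.val ^^^ b.val).testBit (j:ℕ)
        = ((a.val).testBit (j:ℕ)).xor ((b.val).testBit (j:ℕ)) := Nat.testBit_xor ..
    have hx : decide ((a.val ^^^ b.val) / 2^(j:ℕ) % 2 = 1)
        = ((decide (a.val / 2^(j:ℕ) % 2 = 1)).xor (decide (b.val / 2^(j:ℕ) % 2 = 1))) := by
      rw [← t1, ← t2, ← t3, t4]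
    have hx' := congrArg (· = true) hx
    simp only [decide_eq_true_eq, Bool.xor_iff_ne, ne_eq, decide_eq_decide] at hx'
    tauto
  calc ∑ j : Fin α, ((binE α a + binE α b) j).val * 2^(j:ℕ)
      = ∑ j : Fin α, (binE α W j).val * 2^(j:ℕ) := by simp_rw [hc]
    _ = a.val ^^^ b.val := by rw [binE_sum, hWval]


lemma gcd_mul_split (α m β m' : ℕ) (hm : Odd m) (hm' : m' ∣ m) (z : ℕ) :
    Nat.gcd z (2^α * m) = 2^β * m' ↔ (Nat.gcd z (2^α) = 2^β ∧ Nat.gcd z m = m') := by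
  have cop2m : Nat.Coprime 2 m := Nat.coprime_two_left.mpr hm
  have cop2m' : Nat.Coprime 2 m' := Nat.Coprime.coprime_dvd_right hm' cop2m
  constructor
  · intro h
    obtain ⟨s, hs_le, hseq⟩ := (Nat.dvd_prime_pow Nat.prime_two).mp (Nat.gcd_dvd_right z (2^α))
    have hb1 : 2^β ∣ z := dvd_trans (dvd_mul_right _ _) (h ▸ Nat.gcd_dvd_left z _)
    have hb2 : (2:ℕ)^β ∣ 2^α := by
      have hd : (2:ℕ)^β ∣ 2^α * m := dvd_trans (dvd_mul_right _ _) (h ▸ Nat.gcd_dvd_right z _)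
      exact (cop2m.pow_left β).dvd_of_dvd_mul_right hd
    have hb : 2^β ∣ Nat.gcd z (2^α) := Nat.dvd_gcd hb1 hb2
    have h1 : Nat.gcd z (2^α) ∣ 2^β * m' :=
      h ▸ Nat.dvd_gcd (Nat.gcd_dvd_left _ _)
        (dvd_trans (Nat.gcd_dvd_right _ _) (dvd_mul_right _ _))
    have hb' : Nat.gcd z (2^α) ∣ 2^β := by
      rw [hseq] at h1 ⊢
      exact (cop2m'.pow_left s).dvd_of_dvd_mul_right h1
    have hA : Nat.gcd z (2^α) = 2^β := Nat.dvd_antisymm hb' hb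
    refine ⟨hA, ?_⟩
    have hc1 : m' ∣ Nat.gcd z m :=
      Nat.dvd_gcd (dvd_trans (dvd_mul_left _ _) (h ▸ Nat.gcd_dvd_left z _)) hm'
    have hc2 : Nat.gcd z m ∣ m' := by
      have h2 : Nat.gcd z m ∣ 2^β * m' :=
        h ▸ Nat.dvd_gcd (Nat.gcd_dvd_left _ _)
          (dvd_trans (Nat.gcd_dvd_right _ _) (dvd_mul_left _ _))
      have cop : Nat.Coprime (Nat.gcd z m) (2^β) :=
        Nat.Coprime.pow_right β ((Nat.Coprime.coprime_dvd_left (Nat.gcd_dvd_right z m)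
          (Nat.coprime_two_right.mpr hm)))
      exact cop.dvd_of_dvd_mul_left h2
    exact Nat.dvd_antisymm hc2 hc1
  · rintro ⟨hA, hB⟩
    apply Nat.dvd_antisymm
    · have h1 : Nat.gcd z (2^α * m) ∣
          Nat.gcd (Nat.gcd z (2^α * m)) (2^α) * Nat.gcd (Nat.gcd z (2^α * m)) m :=
        Nat.dvd_gcd_mul_gcd_iff_dvd_mul.mpr (Nat.gcd_dvd_right _ _)
      have h2 : Nat.gcd (Nat.gcd z (2^α * m)) (2^α) ∣ 2^β :=
        hA ▸ Nat.dvd_gcd (dvd_trans (Nat.gcd_dvd_left _ _) (Nat.gcd_dvd_left z _))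
          (Nat.gcd_dvd_right _ _)
      have h3 : Nat.gcd (Nat.gcd z (2^α * m)) m ∣ m' :=
        hB ▸ Nat.dvd_gcd (dvd_trans (Nat.gcd_dvd_left _ _) (Nat.gcd_dvd_left z _))
          (Nat.gcd_dvd_right _ _)
      exact h1.trans (mul_dvd_mul h2 h3)
    · exact Nat.dvd_gcd
        ((cop2m'.pow_left β).mul_dvd_of_dvd_of_dvd (hA ▸ Nat.gcd_dvd_left z _)
          (hB ▸ Nat.gcd_dvd_left z _))
        (mul_dvd_mul (hA ▸ Nat.gcd_dvd_right z _) (hB ▸ Nat.gcd_dvd_right z _))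

theorem icg_iso_kronecker_cubelike (α m : ℕ) (hα : 1 ≤ α) (hm0 : 0 < m) (hm : Odd m)
    (β m' : ℕ) (hβ : β ≤ α) (hm' : m' ∣ m) (hproper : 2 ^ β * m' ≠ 2 ^ α * m) :
    ∃ e : ZMod (2 ^ α * m) ≃ (Fin α → ZMod 2) × ZMod m,
      ∀ x y : ZMod (2 ^ α * m),
        cayAdj {z : ZMod (2 ^ α * m) | Nat.gcd z.val (2 ^ α * m) = 2 ^ β * m'} x y =
        Matrix.kroneckerMap (· * ·)
          (cubeAdj {c : Fin α → ZMod 2 |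
            Nat.gcd (∑ j : Fin α, (c j).val * 2 ^ (j : ℕ)) (2 ^ α) = 2 ^ β})
          (cayAdj {z : ZMod m | Nat.gcd z.val m = m'})
          (e x) (e y) := by
  haveI : NeZero (2^α) := ⟨pow_ne_zero α two_ne_zero⟩
  haveI : NeZero m := ⟨hm0.ne'⟩
  haveI : NeZero (2^α * m) := ⟨mul_ne_zero (pow_ne_zero α two_ne_zero) hm0.ne'⟩
  have hcop : Nat.Coprime (2^α) m := Nat.Coprime.pow_left α (Nat.coprime_two_left.mpr hm)
  set ψ := ZMod.chineseRemainder hcop with hψdef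
  have hψ : ∀ w : ZMod (2^α*m), ψ w = ((w.val : ZMod (2^α)), (w.val : ZMod m)) := by
    intro w
    have hdvd : Nat.lcm (2^α) m ∣ 2^α * m := by simp [Nat.lcm_dvd_iff]
    have h1 : ψ w = ((w.val : ℕ) : ZMod (2^α) × ZMod m) := by
      have h0 : ψ w = ZMod.castHom hdvd (ZMod (2^α) × ZMod m) w := rfl
      rw [h0, ZMod.castHom_apply, ← ZMod.natCast_val]
    rw [h1]
    exact Prod.ext (Prod.fst_natCast _) (Prod.snd_natCast _)
  refine ⟨ψ.toEquiv.trans ((binE α).prodCongr (Equiv.refl (ZMod m))), ?_⟩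
  intro x y
  have hcast2 : ∀ w : ZMod (2^α*m),
      ((w.val : ℕ) : ZMod (2^α)) = ZMod.castHom (dvd_mul_right _ _) (ZMod (2^α)) w := by
    intro w; rw [ZMod.natCast_val, ZMod.castHom_apply]
  have hcastm : ∀ w : ZMod (2^α*m),
      ((w.val : ℕ) : ZMod m) = ZMod.castHom (dvd_mul_left _ _) (ZMod m) w := by
    intro w; rw [ZMod.natCast_val, ZMod.castHom_apply]
  set z := x - y with hz
  set A : ZMod (2^α) := ((x.val : ℕ) : ZMod (2^α)) with hA
  set B : ZMod (2^α) := ((y.val : ℕ) : ZMod (2^α)) with hB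
  have hABz : A - B = ((z.val : ℕ) : ZMod (2^α)) := by
    rw [hA, hB, hcast2, hcast2, hcast2, ← map_sub]
  have hABm : ((x.val : ℕ) : ZMod m) - ((y.val : ℕ) : ZMod m) = ((z.val : ℕ) : ZMod m) := by
    rw [hcastm, hcastm, hcastm, ← map_sub]
  -- components of e
  have hex : (ψ.toEquiv.trans ((binE α).prodCongr (Equiv.refl (ZMod m)))) x
      = (binE α A, ((x.val : ℕ) : ZMod m)) := by
    simp [Equiv.trans_apply, Equiv.prodCongr_apply, hψ x, hA]
  have hey : (ψ.toEquiv.trans ((binE α).prodCongr (Equiv.refl (ZMod m)))) y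
      = (binE α B, ((y.val : ℕ) : ZMod m)) := by
    simp [Equiv.trans_apply, Equiv.prodCongr_apply, hψ y, hB]
  -- gcd of sum with 2^α equals gcd of z.val with 2^α
  have hgcd2 : Nat.gcd (∑ j : Fin α, ((binE α A + binE α B) j).val * 2^(j:ℕ)) (2^α)
      = Nat.gcd z.val (2^α) := by
    rw [sum_binE_add, gcd_xor_sub, hABz, ZMod.val_natCast]
    rw [← Nat.gcd_rec, Nat.gcd_comm]
  have hgcdm : Nat.gcd ((((x.val : ℕ) : ZMod m) - ((y.val : ℕ) : ZMod m)).val) m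
      = Nat.gcd z.val m := by
    rw [hABm, ZMod.val_natCast, ← Nat.gcd_rec, Nat.gcd_comm]
  have hiff : (Nat.gcd z.val (2^α * m) = 2^β * m') ↔
      ((Nat.gcd (∑ j : Fin α, ((binE α A + binE α B) j).val * 2^(j:ℕ)) (2^α) = 2^β)
        ∧ Nat.gcd ((((x.val : ℕ) : ZMod m) - ((y.val : ℕ) : ZMod m)).val) m = m') := by
    rw [gcd_mul_split α m β m' hm hm', hgcd2, hgcdm]
  -- assemble
  rw [hex, hey]
  show ({z : ZMod (2^α*m) | Nat.gcd z.val (2^α*m) = 2^β*m'}).indicator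
        (fun _ => (1:ℂ)) (x - y)
      = ({c : Fin α → ZMod 2 |
            Nat.gcd (∑ j : Fin α, (c j).val * 2^(j:ℕ)) (2^α) = 2^β}).indicator
          (fun _ => (1:ℂ)) (binE α A + binE α B)
      * ({z : ZMod m | Nat.gcd z.val m = m'}).indicator (fun _ => (1:ℂ))
          (((x.val : ℕ) : ZMod m) - ((y.val : ℕ) : ZMod m))
  by_cases h1 : (Nat.gcd (∑ j : Fin α, ((binE α A + binE α B) j).val * 2^(j:ℕ)) (2^α) = 2^β) <;>
    by_cases h2 : (Nat.gcd ((((x.val : ℕ) : ZMod m) - ((y.val : ℕ) : ZMod m)).val) m = m')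
  · have m0 : (x - y) ∈ {z : ZMod (2^α*m) | Nat.gcd z.val (2^α*m) = 2^β*m'} :=
      hiff.mpr ⟨h1, h2⟩
    have m1 : (binE α A + binE α B) ∈ {c : Fin α → ZMod 2 |
        Nat.gcd (∑ j : Fin α, (c j).val * 2^(j:ℕ)) (2^α) = 2^β} := h1
    have m2 : (((x.val : ℕ) : ZMod m) - ((y.val : ℕ) : ZMod m)) ∈
        {z : ZMod m | Nat.gcd z.val m = m'} := h2
    rw [Set.indicator_of_mem m0, Set.indicator_of_mem m1, Set.indicator_of_mem m2, one_mul]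
  · have m0 : (x - y) ∉ {z : ZMod (2^α*m) | Nat.gcd z.val (2^α*m) = 2^β*m'} :=
      fun h => h2 (hiff.mp h).2
    have m2 : (((x.val : ℕ) : ZMod m) - ((y.val : ℕ) : ZMod m)) ∉
        {z : ZMod m | Nat.gcd z.val m = m'} := h2
    rw [Set.indicator_of_notMem m0, Set.indicator_of_notMem m2, mul_zero]
  · have m0 : (x - y) ∉ {z : ZMod (2^α*m) | Nat.gcd z.val (2^α*m) = 2^β*m'} :=
      fun h => h1 (hiff.mp h).1
    have m1 : (binE α A + binE α B) ∉ {c : Fin α → ZMod 2 |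
        Nat.gcd (∑ j : Fin α, (c j).val * 2^(j:ℕ)) (2^α) = 2^β} := h1
    rw [Set.indicator_of_notMem m0, Set.indicator_of_notMem m1, zero_mul]
  · have m0 : (x - y) ∉ {z : ZMod (2^α*m) | Nat.gcd z.val (2^α*m) = 2^β*m'} :=
      fun h => h1 (hiff.mp h).1
    have m1 : (binE α A + binE α B) ∉ {c : Fin α → ZMod 2 |
        Nat.gcd (∑ j : Fin α, (c j).val * 2^(j:ℕ)) (2^α) = 2^β} := h1
    rw [Set.indicator_of_notMem m0, Set.indicator_of_notMem m1, zero_mul]
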